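/- Let Γ = BiCay(H,∅,∅,S) be a connected bi-Cayley graph with 1 ∈ S which is normal locally arc-transitive (i.e. the stabilizer of 1₀ in the normalizer X of R(H) in Aut(Γ) is transitive on the neighbourhood of 1₀). Then X acts transitively on the arcs of Γ if and only if there exists an automorphism α of H with S^α = S⁻¹. -/

import Mathlib

open SimpleGraph

/-- The bi-Cayley graph `BiCay(H,R,L,S)` on vertex set `H × Bool`,
where `(h, false)` plays the role of `h₀` and `(h, true)` of `h₁`. -/
def biCay (H : Type*) [Group H] (R L S : Set H) : SimpleGraph (H × Bool) where
  Adj a b := a ≠ b ∧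
    ((a.2 = false ∧ b.2 = false ∧ b.1 * a.1⁻¹ ∈ R ∧ a.1 * b.1⁻¹ ∈ R) ∨
     (a.2 = true ∧ b.2 = true ∧ b.1 * a.1⁻¹ ∈ L ∧ a.1 * b.1⁻¹ ∈ L) ∨
     (a.2 = false ∧ b.2 = true ∧ b.1 * a.1⁻¹ ∈ S) ∨
     (a.2 = true ∧ b.2 = false ∧ a.1 * b.1⁻¹ ∈ S))
  symm := ⟨by rintro a b ⟨hne, h⟩; exact ⟨hne.symm, by tauto⟩⟩
  loopless := ⟨by rintro a ⟨hne, _⟩; exact hne rfl⟩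

/-- Right multiplication by `g⁻¹` as an automorphism of the bi-Cayley graph;
the range of this homomorphism is the group `R(H)` of all right translations. -/
def biCayRightMul (H : Type*) [Group H] (R L S : Set H) :
    H →* (biCay H R L S ≃g biCay H R L S) where
  toFun g :=
    { toEquiv := Equiv.prodCongr (Equiv.mulRight g⁻¹) (Equiv.refl Bool)
      map_rel_iff' := by
        intro a b
        simp only [biCay, Equiv.prodCongr_apply, Equiv.coe_mulRight, Equiv.refl_apply,
          Prod.map, ne_eq, Prod.mk.injEq, Prod.ext_iff]
        constructor
        · rintro ⟨hne, h⟩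
          refine ⟨by rintro ⟨h1, h2⟩; exact hne ⟨by rw [h1], h2⟩, ?_⟩
          simpa [mul_assoc] using h
        · rintro ⟨hne, h⟩
          refine ⟨by rintro ⟨h1, h2⟩; exact hne ⟨mul_right_cancel h1, h2⟩, ?_⟩
          simpa [mul_assoc] using h }
  map_one' := by
    apply RelIso.ext; intro x; simp
  map_mul' g₁ g₂ := by
    apply RelIso.ext; intro x
    simp [RelIso.mul_apply, Prod.map, mul_assoc]

/-- The subgroup `R(H)` of right translations inside `Aut(BiCay(H,R,L,S))`. -/
def biCayRH (H : Type*) [Group H] (R L S : Set H) :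
    Subgroup (biCay H R L S ≃g biCay H R L S) :=
  (biCayRightMul H R L S).range

section Aux
variable {H : Type*} [Group H] (S : Set H)

lemma biCay_adj_iff' (a b : H × Bool) :
    (biCay H ∅ ∅ S).Adj a b ↔
      (a.2 = false ∧ b.2 = true ∧ b.1 * a.1⁻¹ ∈ S) ∨
      (a.2 = true ∧ b.2 = false ∧ a.1 * b.1⁻¹ ∈ S) := by
  constructor
  · rintro ⟨hne, h⟩
    simp only [Set.mem_empty_iff_false, false_and, and_false, false_or] at h
    tauto
  · rintro (⟨h1, h2, h3⟩ | ⟨h1, h2, h3⟩) <;>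
      exact ⟨by rintro rfl; rw [h1] at h2; exact Bool.noConfusion h2, by tauto⟩

lemma biCayRightMul_apply' (g : H) (x : H × Bool) :
    biCayRightMul H ∅ ∅ S g x = (x.1 * g⁻¹, x.2) := rfl

lemma biCayRightMul_injective' : Function.Injective (biCayRightMul H ∅ ∅ S) := by
  intro g h hgh
  have := congrArg (fun φ : biCay H ∅ ∅ S ≃g biCay H ∅ ∅ S => (φ ((1:H), false)).1) hgh
  simp only [biCayRightMul_apply', one_mul] at this
  exact inv_injective this

end Aux

section Swap
variable {H : Type*} [Group H] {S : Set H}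

lemma swap_mem_key {α : H ≃* H} (hα : ⇑α '' S = S⁻¹) (z : H) : α z⁻¹ ∈ S ↔ z ∈ S := by
  have h1 : α z ∈ ⇑α '' S ↔ z ∈ S := by
    constructor
    · rintro ⟨w, hw, he⟩; rwa [← α.injective he]
    · exact fun h => ⟨z, h, rfl⟩
  rw [hα] at h1
  rw [← h1, Set.mem_inv, map_inv]

/-- The side-swapping automorphism induced by `α` with `α '' S = S⁻¹`. -/
def biCaySwap (α : H ≃* H) (hα : ⇑α '' S = S⁻¹) : biCay H ∅ ∅ S ≃g biCay H ∅ ∅ S where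
  toFun x := (α x.1, !x.2)
  invFun x := (α.symm x.1, !x.2)
  left_inv x := by simp
  right_inv x := by simp
  map_rel_iff' := by
    intro a b
    simp only [Equiv.coe_fn_mk, biCay_adj_iff']
    have h1 : α b.1 * (α a.1)⁻¹ = α (a.1 * b.1⁻¹)⁻¹ := by
      rw [← map_inv, ← map_mul]; group
    have h2 : α a.1 * (α b.1)⁻¹ = α (b.1 * a.1⁻¹)⁻¹ := by
      rw [← map_inv, ← map_mul]; group
    rw [h1, h2, swap_mem_key hα, swap_mem_key hα]
    cases a.2 <;> cases b.2 <;> simp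

lemma biCaySwap_apply (α : H ≃* H) (hα : ⇑α '' S = S⁻¹) (x : H × Bool) :
    biCaySwap α hα x = (α x.1, !x.2) := rfl

lemma biCaySwap_conj (α : H ≃* H) (hα : ⇑α '' S = S⁻¹) (g : H) :
    biCaySwap α hα * biCayRightMul H ∅ ∅ S g * (biCaySwap α hα)⁻¹ =
      biCayRightMul H ∅ ∅ S (α g) := by
  apply RelIso.ext
  intro x
  have hinv : (biCaySwap α hα)⁻¹ x = (α.symm x.1, !x.2) := rfl
  rw [RelIso.mul_apply, RelIso.mul_apply, hinv, biCayRightMul_apply', biCaySwap_apply,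
    biCayRightMul_apply']
  simp [map_mul]

lemma biCaySwap_mem_normalizer (α : H ≃* H) (hα : ⇑α '' S = S⁻¹) :
    biCaySwap α hα ∈ Subgroup.normalizer (biCayRH H ∅ ∅ S : Set (biCay H ∅ ∅ S ≃g biCay H ∅ ∅ S)) := by
  rw [Subgroup.mem_normalizer_iff]
  intro h
  constructor
  · rintro ⟨g, rfl⟩
    exact ⟨α g, (biCaySwap_conj α hα g).symm⟩
  · rintro ⟨g, hg⟩
    refine ⟨α.symm g, ?_⟩
    have := biCaySwap_conj α hα (α.symm g)
    rw [MulEquiv.apply_symm_apply] at this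
    rw [hg] at this
    exact mul_left_cancel (mul_right_cancel this)

end Swap

section Main
variable {H : Type*} [Group H] {S : Set H}

lemma inv_apply_eq' {G : SimpleGraph (H × Bool)} (f : G ≃g G) (x y : H × Bool)
    (h : f x = y) : f⁻¹ y = x := by
  rw [← h, ← RelIso.mul_apply, inv_mul_cancel]; rfl

lemma canonical_arc (h1 : (1 : H) ∈ S)
    (hlocal : ∀ u w : H × Bool,
      (biCay H ∅ ∅ S).Adj ((1 : H), false) u → (biCay H ∅ ∅ S).Adj ((1 : H), false) w →
      ∃ φ ∈ Subgroup.normalizer (biCayRH H ∅ ∅ S : Set (biCay H ∅ ∅ S ≃g biCay H ∅ ∅ S)),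
        φ ((1 : H), false) = ((1 : H), false) ∧ φ u = w)
    (a b : H × Bool) (hadj : (biCay H ∅ ∅ S).Adj a b) (ha : a.2 = false) :
    ∃ χ ∈ Subgroup.normalizer (biCayRH H ∅ ∅ S : Set (biCay H ∅ ∅ S ≃g biCay H ∅ ∅ S)),
      χ a = ((1 : H), false) ∧ χ b = ((1 : H), true) := by
  obtain ⟨x, bx⟩ := a
  obtain ⟨y, by'⟩ := b
  simp only at ha
  subst ha
  rw [biCay_adj_iff'] at hadj
  simp only at hadj
  have hyx : by' = true ∧ y * x⁻¹ ∈ S := by tauto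
  obtain ⟨hby, hyS⟩ := hyx
  subst hby
  have h1adj : (biCay H ∅ ∅ S).Adj ((1 : H), false) (y * x⁻¹, true) := by
    rw [biCay_adj_iff']; left; simpa using hyS
  have h0adj : (biCay H ∅ ∅ S).Adj ((1 : H), false) ((1 : H), true) := by
    rw [biCay_adj_iff']; left; simpa using h1
  obtain ⟨φ₀, hφ₀n, hfix, hmap⟩ := hlocal (y * x⁻¹, true) ((1 : H), true) h1adj h0adj
  have hRmem : biCayRightMul H ∅ ∅ S x ∈ Subgroup.normalizer (biCayRH H ∅ ∅ S : Set (biCay H ∅ ∅ S ≃g biCay H ∅ ∅ S)) :=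
    Subgroup.le_normalizer ⟨x, rfl⟩
  refine ⟨φ₀ * biCayRightMul H ∅ ∅ S x, mul_mem hφ₀n hRmem, ?_, ?_⟩
  · rw [RelIso.mul_apply, biCayRightMul_apply']
    simpa using hfix
  · rw [RelIso.mul_apply, biCayRightMul_apply']
    exact hmap

end Main
/-- Let `Γ = BiCay(H,∅,∅,S)` be a connected bi-Cayley graph with
`1 ∈ S`, `X` the normalizer of `R(H)` in `Aut(Γ)`, and suppose `Γ` is normal locally
arc-transitive, i.e. the stabilizer of `1₀` in `X` is transitive on the neighbourhood
of `1₀`. Then `X` is transitive on the arcs of `Γ` iff some automorphism `α` of `H`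
satisfies `S^α = S⁻¹`. -/
theorem biCay_normal_locally_arc_transitive_arc_transitive_iff
    {H : Type*} [Group H] [Finite H] (S : Set H) (h1 : (1 : H) ∈ S)
    (hconn : (biCay H ∅ ∅ S).Connected)
    (hlocal : ∀ u w : H × Bool,
      (biCay H ∅ ∅ S).Adj ((1 : H), false) u → (biCay H ∅ ∅ S).Adj ((1 : H), false) w →
      ∃ φ ∈ Subgroup.normalizer (biCayRH H ∅ ∅ S : Set (biCay H ∅ ∅ S ≃g biCay H ∅ ∅ S)),
        φ ((1 : H), false) = ((1 : H), false) ∧ φ u = w) :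
    (∀ a₁ b₁ a₂ b₂ : H × Bool,
        (biCay H ∅ ∅ S).Adj a₁ b₁ → (biCay H ∅ ∅ S).Adj a₂ b₂ →
        ∃ φ ∈ Subgroup.normalizer (biCayRH H ∅ ∅ S : Set (biCay H ∅ ∅ S ≃g biCay H ∅ ∅ S)), φ a₁ = a₂ ∧ φ b₁ = b₂)
    ↔ ∃ α : H ≃* H, ⇑α '' S = S⁻¹ := by
  constructor
  · -- arc transitive → automorphism
    intro htrans
    have harc1 : (biCay H ∅ ∅ S).Adj ((1 : H), false) ((1 : H), true) := by
      rw [biCay_adj_iff']; left; simpa using h1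
    obtain ⟨φ, hφn, hφ1, hφ2⟩ :=
      htrans ((1 : H), false) ((1 : H), true) ((1 : H), true) ((1 : H), false)
        harc1 harc1.symm
    have hmemn := (Subgroup.mem_normalizer_iff).1 hφn
    have hφn' : φ⁻¹ ∈ Subgroup.normalizer (biCayRH H ∅ ∅ S : Set (biCay H ∅ ∅ S ≃g biCay H ∅ ∅ S)) :=
      (Subgroup.normalizer _).inv_mem hφn
    have hmemn' := (Subgroup.mem_normalizer_iff).1 hφn'
    choose σ hσ using fun g => (hmemn (biCayRightMul H ∅ ∅ S g)).1 ⟨g, rfl⟩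
    choose τ hτ using fun g => (hmemn' (biCayRightMul H ∅ ∅ S g)).1 ⟨g, rfl⟩
    -- hσ g : biCayRightMul _ (σ g) = φ * R g * φ⁻¹
    have Rinj := biCayRightMul_injective' (H := H) S
    have hmul : ∀ g h : H, σ (g * h) = σ g * σ h := by
      intro g h
      apply Rinj
      rw [map_mul, hσ, hσ, hσ, map_mul]
      group
    have hleft : ∀ g : H, τ (σ g) = g := by
      intro g
      apply Rinj
      rw [hτ, hσ]
      group
    have hright : ∀ g : H, σ (τ g) = g := by
      intro g
      apply Rinj
      rw [hσ, hτ]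
      group
    let α : H ≃* H := ⟨⟨σ, τ, hleft, hright⟩, hmul⟩
    have hcomm : ∀ (g : H) (p : H × Bool),
        biCayRightMul H ∅ ∅ S (σ g) (φ p) = φ (biCayRightMul H ∅ ∅ S g p) := by
      intro g p
      have h2 : biCayRightMul H ∅ ∅ S (σ g) * φ = φ * biCayRightMul H ∅ ∅ S g := by
        rw [hσ]; group
      have := congrArg (fun ψ : biCay H ∅ ∅ S ≃g biCay H ∅ ∅ S => ψ p) h2
      simpa [RelIso.mul_apply] using this
    have hinv : ∀ g : H, σ g⁻¹ = (σ g)⁻¹ := fun g => map_inv α g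
    have hfalse : ∀ x : H, φ (x, false) = (σ x, true) := by
      intro x
      have := hcomm x⁻¹ ((1 : H), false)
      rw [hφ1, biCayRightMul_apply', biCayRightMul_apply'] at this
      simp only [one_mul, inv_inv] at this
      rw [← this, hinv, inv_inv]
    have htrue : ∀ x : H, φ (x, true) = (σ x, false) := by
      intro x
      have := hcomm x⁻¹ ((1 : H), true)
      rw [hφ2, biCayRightMul_apply', biCayRightMul_apply'] at this
      simp only [one_mul, inv_inv] at this
      rw [← this, hinv, inv_inv]
    have hiff : ∀ z : H, z ∈ S ↔ (σ z)⁻¹ ∈ S := by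
      intro z
      have h3 : (biCay H ∅ ∅ S).Adj (φ ((1 : H), false)) (φ (z, true)) ↔
          (biCay H ∅ ∅ S).Adj ((1 : H), false) (z, true) := φ.map_rel_iff
      rw [hφ1, htrue, biCay_adj_iff', biCay_adj_iff'] at h3
      simpa using h3.symm
    refine ⟨α, ?_⟩
    ext t
    constructor
    · rintro ⟨s, hs, rfl⟩
      exact Set.mem_inv.2 ((hiff s).1 hs)
    · intro ht
      refine ⟨τ t, ?_, hright t⟩
      rw [hiff (τ t), hright]
      exact Set.mem_inv.1 ht
  · -- automorphism → arc transitive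
    rintro ⟨α, hα⟩
    have hcanon : ∀ a b : H × Bool, (biCay H ∅ ∅ S).Adj a b →
        ∃ χ ∈ Subgroup.normalizer (biCayRH H ∅ ∅ S : Set (biCay H ∅ ∅ S ≃g biCay H ∅ ∅ S)),
          χ a = ((1 : H), false) ∧ χ b = ((1 : H), true) := by
      intro a b hadj
      rcases Bool.eq_false_or_eq_true a.2 with ha | ha
      · -- a.2 = true : use the swap
        have hswap := biCaySwap_mem_normalizer α hα
        have hadj' : (biCay H ∅ ∅ S).Adj (biCaySwap α hα a) (biCaySwap α hα b) :=
          (biCaySwap α hα).map_rel_iff.2 hadj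
        have ha' : (biCaySwap α hα a).2 = false := by
          rw [biCaySwap_apply]; simp [ha]
        obtain ⟨χ, hχn, hχa, hχb⟩ := canonical_arc h1 hlocal _ _ hadj' ha'
        refine ⟨χ * biCaySwap α hα, mul_mem hχn hswap, ?_, ?_⟩
        · rw [RelIso.mul_apply]; exact hχa
        · rw [RelIso.mul_apply]; exact hχb
      · exact canonical_arc h1 hlocal a b hadj ha
    intro a₁ b₁ a₂ b₂ h₁ h₂
    obtain ⟨χ₁, hχ₁n, hχ₁a, hχ₁b⟩ := hcanon a₁ b₁ h₁
    obtain ⟨χ₂, hχ₂n, hχ₂a, hχ₂b⟩ := hcanon a₂ b₂ h₂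
    refine ⟨χ₂⁻¹ * χ₁, mul_mem ((Subgroup.normalizer _).inv_mem hχ₂n) hχ₁n, ?_, ?_⟩
    · rw [RelIso.mul_apply, hχ₁a, inv_apply_eq' χ₂ a₂ _ hχ₂a]
    · rw [RelIso.mul_apply, hχ₁b, inv_apply_eq' χ₂ b₂ _ hχ₂b]
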